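/- For any two standard intervals I and J in S^1, either I ⊆ J, or J ⊆ I, or I and J have disjoint interiors. -/

import Mathlib

noncomputable section

open Set

/-- The circle `S¹ = ℝ/ℤ`. -/
abbrev Circle1 := AddCircle (1 : ℝ)

/-- `(u, v)` are the endpoints of a standard interval, i.e. the real interval `[u,v]` has
the form `[(3k+1)/(3·2ⁿ), (3k+2)/(3·2ⁿ)]` or `[(3k-1)/(3·2ⁿ⁺¹), (3k+1)/(3·2ⁿ⁺¹)]`. -/
def IsStdPair (u v : ℝ) : Prop :=
  ∃ (k : ℤ) (n : ℕ),
    (u = (3 * (k : ℝ) + 1) / (3 * 2 ^ n) ∧ v = (3 * (k : ℝ) + 2) / (3 * 2 ^ n)) ∨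
    (u = (3 * (k : ℝ) - 1) / (3 * 2 ^ (n + 1)) ∧
      v = (3 * (k : ℝ) + 1) / (3 * 2 ^ (n + 1)))

/-- A standard interval of the circle: the image in `S¹` of a real standard interval. -/
def IsStdInterval (I : Set Circle1) : Prop :=
  ∃ u v : ℝ, IsStdPair u v ∧ I = (fun x : ℝ => (x : Circle1)) '' Set.Icc u v

namespace StdAux

/-- equality in the circle means differing by an integer -/
lemma coe_eq_coe_iff {t x : ℝ} : (t : Circle1) = (x : Circle1) ↔ ∃ k : ℤ, t = x + k := by
  rw [QuotientAddGroup.eq_iff_sub_mem]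
  constructor
  · rintro h
    rcases AddSubgroup.mem_zmultiples_iff.mp h with ⟨k, hk⟩
    have hk' : (k:ℝ) = t - x := by simpa [zsmul_eq_mul] using hk
    exact ⟨k, by linarith⟩
  · rintro ⟨k, hk⟩
    exact AddSubgroup.mem_zmultiples_iff.mpr ⟨k, by simp [hk]⟩

lemma mem_image_iff {u v x : ℝ} :
    ((x : Circle1) ∈ (fun t : ℝ => (t : Circle1)) '' Icc u v) ↔ ∃ k : ℤ, x - (k:ℝ) ∈ Icc u v := by
  constructor
  · rintro ⟨t, ht, hte⟩
    rcases coe_eq_coe_iff.mp hte with ⟨k, hk⟩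
    refine ⟨-k, ?_⟩
    have hxt : x - ((-k : ℤ):ℝ) = t := by rw [hk]; push_cast; ring
    rw [hxt]; exact ht
  · rintro ⟨k, hk⟩
    exact ⟨x - k, hk, by rw [coe_eq_coe_iff]; exact ⟨-k, by push_cast; ring⟩⟩

/-- subset criterion -/
lemma image_subset_of_shift {u v u' v' : ℝ} (h : ∃ k : ℤ, u ≤ u' + k ∧ v' + k ≤ v) :
    (fun t : ℝ => (t : Circle1)) '' Icc u' v' ⊆ (fun t : ℝ => (t : Circle1)) '' Icc u v := by
  rcases h with ⟨k, hk1, hk2⟩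
  rintro z ⟨x, hx, rfl⟩
  refine ⟨x + k, ⟨by linarith [hx.1], by linarith [hx.2]⟩, ?_⟩
  rw [coe_eq_coe_iff]; exact ⟨k, rfl⟩

/-- interior of an arc is contained in the open arc -/
lemma interior_subset_open_arc {u v : ℝ} (h1 : u < v) (h2 : v < u + 1) :
    interior ((fun t : ℝ => (t : Circle1)) '' Icc u v) ⊆
      (fun t : ℝ => (t : Circle1)) '' Ioo u v := by
  intro z hz
  obtain ⟨x, hx, rfl⟩ := interior_subset hz
  have hUopen : IsOpen ((fun t : ℝ => (t : Circle1)) ⁻¹'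
      interior ((fun t : ℝ => (t : Circle1)) '' Icc u v)) :=
    isOpen_interior.preimage continuous_quotient_mk'
  have hxU : x ∈ (fun t : ℝ => (t : Circle1)) ⁻¹'
      interior ((fun t : ℝ => (t : Circle1)) '' Icc u v) := hz
  have hUsub : ∀ y : ℝ, y ∈ (fun t : ℝ => (t : Circle1)) ⁻¹'
      interior ((fun t : ℝ => (t : Circle1)) '' Icc u v) →
      ∃ k : ℤ, y - (k:ℝ) ∈ Icc u v := fun y hy => mem_image_iff.mp (interior_subset hy)
  obtain ⟨ε, hε, hball⟩ := Metric.isOpen_iff.mp hUopen x hxU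
  rcases hx.1.lt_or_eq with hlu | heu
  · rcases hx.2.lt_or_eq with hxv | hxv
    · exact ⟨x, ⟨hlu, hxv⟩, rfl⟩
    · -- x = v : pick y slightly to the right
      exfalso
      set y : ℝ := (x + min (u + 1) (x + ε)) / 2 with hy
      have hmin1 : x < min (u + 1) (x + ε) := lt_min (by linarith [hx.2, hxv]) (by linarith)
      have hyx : x < y := by rw [hy]; linarith
      have hyb : y ∈ Metric.ball x ε := by
        rw [Metric.mem_ball, Real.dist_eq, abs_lt]
        have : min (u + 1) (x + ε) ≤ x + ε := min_le_right _ _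
        constructor <;> [linarith; (rw [hy]; linarith)]
      obtain ⟨k, hk1, hk2⟩ := hUsub y (hball hyb)
      have hyu : y < u + 1 := by
        have : min (u + 1) (x + ε) ≤ u + 1 := min_le_left _ _
        rw [hy]; nlinarith [hx.2, hxv]
      rcases le_or_gt k 0 with hk | hk
      · have : (k:ℝ) ≤ 0 := by exact_mod_cast hk
        have : v < y - k := by linarith [hxv]
        linarith
      · have : (1:ℝ) ≤ k := by exact_mod_cast hk
        have : y - (k:ℝ) < u := by linarith
        linarith
  · -- x = u : pick y slightly to the left
    exfalso
    set y : ℝ := (max (v - 1) (x - ε) + x) / 2 with hy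
    have hmax1 : max (v - 1) (x - ε) < x := max_lt (by linarith [heu]) (by linarith)
    have hyx : y < x := by rw [hy]; linarith
    have hyb : y ∈ Metric.ball x ε := by
      rw [Metric.mem_ball, Real.dist_eq, abs_lt]
      have : x - ε ≤ max (v - 1) (x - ε) := le_max_right _ _
      constructor <;> [( rw [hy]; linarith); linarith]
    obtain ⟨k, hk1, hk2⟩ := hUsub y (hball hyb)
    have hyv : v - 1 < y := by
      have : v - 1 ≤ max (v - 1) (x - ε) := le_max_left _ _
      rw [hy]; nlinarith [heu]
    rcases le_or_gt 0 k with hk | hk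
    · have : (0:ℝ) ≤ k := by exact_mod_cast hk
      have : y - (k:ℝ) < u := by linarith [heu]
      linarith
    · have : (k:ℝ) ≤ -1 := by exact_mod_cast (by omega : k ≤ -1)
      have : v < y - k := by linarith
      linarith

/-- disjointness criterion -/
lemma interior_disjoint {u v u' v' : ℝ} (h1 : u < v) (h2 : v < u + 1)
    (h1' : u' < v') (h2' : v' < u' + 1)
    (H : ∀ k : ℤ, v' + k ≤ u ∨ v ≤ u' + k) :
    interior ((fun t : ℝ => (t : Circle1)) '' Icc u v) ∩
      interior ((fun t : ℝ => (t : Circle1)) '' Icc u' v') = ∅ := by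
  rw [Set.eq_empty_iff_forall_notMem]
  rintro z ⟨hz1, hz2⟩
  obtain ⟨x, hx, rfl⟩ := interior_subset_open_arc h1 h2 hz1
  obtain ⟨x', hx', hxx⟩ := interior_subset_open_arc h1' h2' hz2
  rcases coe_eq_coe_iff.mp hxx with ⟨k, hk⟩
  rcases H (-k) with h | h
  · push_cast at h
    linarith [hx.1, hx'.2]
  · push_cast at h
    linarith [hx.2, hx'.1]

lemma pow2_mod3 (e : ℕ) : (2:ℤ)^e % 3 = 1 ∨ (2:ℤ)^e % 3 = 2 := by
  induction e with
  | zero => left; rfl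
  | succ n ih => rw [pow_succ]; omega

/-- integer dichotomy -/
lemma arith (a b : ℤ) (e m : ℕ) (ha : a % 3 = 2) (hb : b % 3 = 2) :
    (∃ k : ℤ, a * 2^e ≤ b + k * (6 * 2^m) ∧ b + k * (6 * 2^m) + 2 ≤ a * 2^e + 2 * 2^e) ∨
    (∀ k : ℤ, b + k * (6 * 2^m) + 2 ≤ a * 2^e ∨ a * 2^e + 2 * 2^e ≤ b + k * (6 * 2^m)) := by
  by_cases h : ∃ k : ℤ, a * 2^e ≤ b + k * (6 * 2^m) ∧ b + k * (6 * 2^m) + 2 ≤ a * 2^e + 2 * 2^e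
  · exact Or.inl h
  · right
    push_neg at h
    intro k
    have hnk := h k
    set c := b + k * (6 * 2^m) with hc
    have hc3 : c % 3 = 2 := by
      have h3 : c = b + (k * (2 * 2^m)) * 3 := by rw [hc]; ring
      omega
    have hp := pow2_mod3 e
    have hP : (0:ℤ) < 2^e := by positivity
    have hm1 : (a * 2^e) % 3 = 1 ∨ (a * 2^e) % 3 = 2 := by
      rw [Int.mul_emod, ha]
      rcases hp with h' | h' <;> rw [h'] <;> simp
    have hm2 : ((a + 2) * 2^e) % 3 = 1 ∨ ((a + 2) * 2^e) % 3 = 2 := by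
      rw [Int.mul_emod]
      have h4 : (a + 2) % 3 = 1 := by omega
      rw [h4]
      rcases hp with h' | h' <;> rw [h'] <;> simp
    have hAL : a * 2^e + 2 * 2^e = (a + 2) * 2^e := by ring
    set X := a * 2^e
    set Y := (a + 2) * 2^e
    omega

/-- key lemma at real level -/
lemma key (a b : ℤ) (n e : ℕ) (ha : a % 3 = 2) (hb : b % 3 = 2) :
    ((fun t : ℝ => (t : Circle1)) '' Icc ((b:ℝ)/(6*2^(n+e))) (((b:ℝ)+2)/(6*2^(n+e))) ⊆
      (fun t : ℝ => (t : Circle1)) '' Icc ((a:ℝ)/(6*2^n)) (((a:ℝ)+2)/(6*2^n))) ∨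
    interior ((fun t : ℝ => (t : Circle1)) '' Icc ((a:ℝ)/(6*2^n)) (((a:ℝ)+2)/(6*2^n))) ∩
      interior ((fun t : ℝ => (t : Circle1)) '' Icc ((b:ℝ)/(6*2^(n+e))) (((b:ℝ)+2)/(6*2^(n+e)))) = ∅ := by
  have hDpos : (0:ℝ) < 6*2^(n+e) := by positivity
  have hDne : (6*2^(n+e) : ℝ) ≠ 0 := ne_of_gt hDpos
  have e1 : (a:ℝ)/(6*2^n) = ((a:ℝ) * 2^e)/(6*2^(n+e)) := by
    rw [pow_add]; field_simp
  have e2 : ((a:ℝ)+2)/(6*2^n) = ((a:ℝ)*2^e + 2*2^e)/(6*2^(n+e)) := by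
    rw [pow_add]; field_simp
  have hsplit : ∀ (s : ℝ) (j : ℤ), s/(6*2^(n+e)) + (j:ℝ) = (s + j*(6*2^(n+e)))/(6*2^(n+e)) := by
    intro s j; field_simp
  have hdiv : ∀ s t : ℝ, s ≤ t → s/(6*2^(n+e)) ≤ t/(6*2^(n+e)) := by
    intro s t h; gcongr
  rcases arith a b e (n+e) ha hb with ⟨k, hk1, hk2⟩ | h
  · left
    rw [e1, e2]
    refine image_subset_of_shift ⟨k, ?_, ?_⟩
    · rw [hsplit]
      apply hdiv
      exact_mod_cast hk1
    · rw [hsplit]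
      apply hdiv
      push_cast
      have : ((b + k * (6 * 2^(n+e)) + 2 : ℤ) : ℝ) ≤ ((a * 2^e + 2*2^e : ℤ):ℝ) := by
        exact_mod_cast hk2
      push_cast at this
      linarith
  · right
    rw [e1, e2]
    have hLe : (2:ℝ)^e ≤ 2^(n+e) := by
      apply pow_le_pow_right₀ (by norm_num) (by omega)
    have hdivlt : ∀ s t : ℝ, s < t → s/(6*2^(n+e)) < t/(6*2^(n+e)) := by
      intro s t h'; gcongr
    have hsplit1 : ∀ s : ℝ, s/(6*2^(n+e)) + 1 = (s + 6*2^(n+e))/(6*2^(n+e)) := by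
      intro s; field_simp
    have h2e : (0:ℝ) < 2^e := by positivity
    have h2ne : (0:ℝ) < 2^(n+e) := by positivity
    have h1e : (1:ℝ) ≤ 2^(n+e) := by
      have := pow_le_pow_right₀ (by norm_num : (1:ℝ) ≤ 2) (Nat.zero_le (n+e))
      simpa using this
    apply interior_disjoint
    · exact hdivlt _ _ (by linarith)
    · rw [hsplit1]
      exact hdivlt _ _ (by linarith)
    · exact hdivlt _ _ (by linarith)
    · rw [hsplit1]
      exact hdivlt _ _ (by linarith)
    · intro κ
      rcases h κ with hl | hr
      · left
        rw [hsplit]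
        apply hdiv
        have := (@Int.cast_le ℝ _ _ _).mpr hl
        push_cast at this
        linarith
      · right
        rw [hsplit]
        apply hdiv
        have := (@Int.cast_le ℝ _ _ _).mpr hr
        push_cast at this
        linarith

lemma std_norm {u v : ℝ} (h : IsStdPair u v) :
    ∃ (a : ℤ) (n : ℕ), a % 3 = 2 ∧ u = (a:ℝ)/(6*2^n) ∧ v = ((a:ℝ)+2)/(6*2^n) := by
  obtain ⟨k, n, h | h⟩ := h
  · refine ⟨6*k+2, n, by omega, ?_, ?_⟩
    · rw [h.1]; push_cast; ring_nf
    · rw [h.2]; push_cast; ring_nf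
  · refine ⟨3*k-1, n, by omega, ?_, ?_⟩
    · rw [h.1]; push_cast; rw [pow_succ]; ring_nf
    · rw [h.2]; push_cast; rw [pow_succ]; ring_nf

end StdAux

open StdAux in
/-- Any two standard intervals are nested or have disjoint interiors. -/
theorem standard_intervals_nested_or_disjoint (I J : Set Circle1)
    (hI : IsStdInterval I) (hJ : IsStdInterval J) :
    I ⊆ J ∨ J ⊆ I ∨ interior I ∩ interior J = ∅ := by
  obtain ⟨u, v, hpI, rfl⟩ := hI
  obtain ⟨u', v', hpJ, rfl⟩ := hJ
  obtain ⟨a, n, ha, rfl, rfl⟩ := std_norm hpI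
  obtain ⟨b, m, hb, rfl, rfl⟩ := std_norm hpJ
  rcases le_total n m with hnm | hmn
  · obtain ⟨e, rfl⟩ := Nat.exists_eq_add_of_le hnm
    rcases key a b n e ha hb with h | h
    · exact Or.inr (Or.inl h)
    · exact Or.inr (Or.inr h)
  · obtain ⟨e, rfl⟩ := Nat.exists_eq_add_of_le hmn
    rcases key b a m e hb ha with h | h
    · exact Or.inl h
    · exact Or.inr (Or.inr (by rw [Set.inter_comm]; exact h))
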